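/- Let a, b be distinct points of the open unit disk 𝔹² ⊂ ℂ. Define cen := (a(1−|b|²) + b(1−|a|²))/(2 − a·conj(b) − conj(a)·b), p := (a(1−|b|²) + b(1−|a|²))/(2 − |a|² − |b|²), and the hyperbolic midpoint m := (a(1−|b|²) + b(1−|a|²))/(1 − |a|²|b|² + √((1−|a|²)(1−|b|²))·|1 − conj(a)·b|). Then ρ(cen, m) = ρ(m, p), i.e. m is the hyperbolic midpoint of the segment [cen, p]. -/

import Mathlib

open Complex

/-- The hyperbolic distance of the unit disk:
`ρ(x,y) = 2·arsinh(|x−y|/√((1−|x|²)(1−|y|²)))`. -/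
noncomputable def hypDist (x y : ℂ) : ℝ :=
  2 * Real.arsinh (‖x - y‖ /
    Real.sqrt ((1 - (‖x‖)^2) * (1 - (‖y‖)^2)))

lemma hypAux (N : ℂ) (r s : ℝ) (hr : 0 < r) (hs : 0 < s)
    (hX : 0 ≤ (r^2 - (‖N‖)^2) * (s^2 - (‖N‖)^2)) :
    hypDist (N / (r:ℂ)) (N / (s:ℂ)) =
    2 * Real.arsinh (‖N‖ * |s - r| /
      Real.sqrt ((r^2 - (‖N‖)^2) * (s^2 - (‖N‖)^2))) := by
  have hr0 : (r:ℂ) ≠ 0 := by exact_mod_cast hr.ne'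
  have hs0 : (s:ℂ) ≠ 0 := by exact_mod_cast hs.ne'
  rw [hypDist]
  have h1 : N / (r:ℂ) - N / (s:ℂ) = N * (((s - r : ℝ)) : ℂ) / ((r:ℂ) * (s:ℂ)) := by
    field_simp; push_cast; ring
  have h2 : ‖N / (r:ℂ) - N / (s:ℂ)‖ = ‖N‖ * |s - r| / (r * s) := by
    rw [h1, norm_div, norm_mul, norm_mul, Complex.norm_real, Complex.norm_real,
      Complex.norm_real, Real.norm_eq_abs, Real.norm_eq_abs, Real.norm_eq_abs, abs_of_pos hr, abs_of_pos hs]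
  have h3 : ∀ x : ℝ, 0 < x → 1 - (‖N/(x:ℂ)‖)^2 = (x^2 - (‖N‖)^2)/x^2 := by
    intro x hx
    rw [norm_div, Complex.norm_real, Real.norm_eq_abs, abs_of_pos hx, div_pow]
    field_simp
  rw [h2, h3 r hr, h3 s hs]
  have h4 : (r ^ 2 - ‖N‖ ^ 2) / r ^ 2 * ((s ^ 2 - ‖N‖ ^ 2) / s ^ 2)
      = ((r ^ 2 - ‖N‖ ^ 2) * (s ^ 2 - ‖N‖ ^ 2)) / (r*s)^2 := by
    ring
  rw [h4, Real.sqrt_div hX, Real.sqrt_sq (by positivity : (0:ℝ) ≤ r*s)]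
  congr 1
  rcases eq_or_ne (Real.sqrt ((r ^ 2 - ‖N‖ ^ 2) * (s ^ 2 - ‖N‖ ^ 2))) 0 with h|h
  · simp [h]
  · field_simp

lemma core (N : ℂ) (u v t S c : ℝ) (hu0 : 0 ≤ u) (hu1 : u < 1) (hv0 : 0 ≤ v) (hv1 : v < 1)
    (hS2 : S^2 = (1-u)*(1-v)) (hSpos : 0 < S) (hcpos : 0 < c)
    (hc2 : c^2 = 1 - 2*t + u*v)
    (hL2 : (‖N‖)^2 = u*(1-v)^2 + v*(1-u)^2 + 2*t*(1-u)*(1-v)) :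
    hypDist (N / ((2 - 2*t : ℝ):ℂ)) (N / ((1 - u*v + S*c : ℝ):ℂ)) =
    hypDist (N / ((1 - u*v + S*c : ℝ):ℂ)) (N / ((2 - u - v : ℝ):ℂ)) := by
  have huv : u * v < 1 := by nlinarith
  have hr1 : 0 < 2 - 2*t := by nlinarith [sq_nonneg c]
  have hr2 : 0 < 2 - u - v := by linarith
  have hScpos : 0 < S * c := mul_pos hSpos hcpos
  have hr3 : 0 < 1 - u*v + S*c := by linarith
  have hQ : 0 < (2 - 2*t) + (2 - u - v) := by linarith
  have hd1 : (2 - 2*t)^2 - (‖N‖)^2 = c^2 * ((2 - 2*t) + (2 - u - v)) := by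
    linear_combination (-1)*hL2 - ((2-2*t)+(2-u-v))*hc2
  have hd2 : (2 - u - v)^2 - (‖N‖)^2 = S^2 * ((2 - 2*t) + (2 - u - v)) := by
    linear_combination (-1)*hL2 - ((2-2*t)+(2-u-v))*hS2
  have hd3 : (1 - u*v + S*c)^2 - (‖N‖)^2 = 2*(S*c) * (1 - u*v + S*c) := by
    linear_combination (-1)*hL2 - c^2*hS2 - ((1-u)*(1-v))*hc2
  have hd3pos : 0 < 2*(S*c) * (1 - u*v + S*c) := by positivity
  have hX1 : 0 ≤ ((2 - 2*t)^2 - (‖N‖)^2) * ((1 - u*v + S*c)^2 - (‖N‖)^2) := by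
    rw [hd1, hd3]; positivity
  have hX2 : 0 ≤ ((1 - u*v + S*c)^2 - (‖N‖)^2) * ((2 - u - v)^2 - (‖N‖)^2) := by
    rw [hd2, hd3]; positivity
  rw [hypAux N _ _ hr1 hr3 hX1, hypAux N _ _ hr3 hr2 hX2]
  congr 1
  rw [hd1, hd2, hd3]
  have habs1 : |(1 - u*v + S*c) - (2 - 2*t)| = c * |S - c| := by
    rw [show (1 - u*v + S*c) - (2 - 2*t) = c * (S - c) by linear_combination hc2,
      abs_mul, abs_of_pos hcpos]
  have habs2 : |(2 - u - v) - (1 - u*v + S*c)| = S * |S - c| := by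
    rw [show (2 - u - v) - (1 - u*v + S*c) = S * (S - c) by linear_combination -hS2,
      abs_mul, abs_of_pos hSpos]
  rw [habs1, habs2]
  rw [show c^2 * ((2 - 2*t) + (2 - u - v)) * (2*(S*c) * (1 - u*v + S*c))
      = c^2 * (((2 - 2*t) + (2 - u - v)) * (2*(S*c) * (1 - u*v + S*c))) by ring,
    show 2*(S*c) * (1 - u*v + S*c) * (S^2 * ((2 - 2*t) + (2 - u - v)))
      = S^2 * (((2 - 2*t) + (2 - u - v)) * (2*(S*c) * (1 - u*v + S*c))) by ring,
    Real.sqrt_mul (sq_nonneg c), Real.sqrt_mul (sq_nonneg S),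
    Real.sqrt_sq hcpos.le, Real.sqrt_sq hSpos.le]
  rw [show ‖N‖ * (c * |S - c|) = c * (‖N‖ * |S - c|) by ring,
    show ‖N‖ * (S * |S - c|) = S * (‖N‖ * |S - c|) by ring,
    mul_div_mul_left _ _ hcpos.ne', mul_div_mul_left _ _ hSpos.ne']
open Complex

/-- Lemma 2.4: the hyperbolic midpoint `m` of `a` and `b` is also the hyperbolic midpoint
of the segment `[cen, p]`. -/
theorem stmt_3 (a b : ℂ) (ha : ‖a‖ < 1) (hb : ‖b‖ < 1) (hab : a ≠ b) :
    let cen : ℂ := (a * (1 - (‖b‖ : ℂ)^2) + b * (1 - (‖a‖ : ℂ)^2)) /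
      (2 - a * (starRingEnd ℂ b) - (starRingEnd ℂ a) * b)
    let p : ℂ := (a * (1 - (‖b‖ : ℂ)^2) + b * (1 - (‖a‖ : ℂ)^2)) /
      (2 - (‖a‖ : ℂ)^2 - (‖b‖ : ℂ)^2)
    let m : ℂ := (a * (1 - (‖b‖ : ℂ)^2) + b * (1 - (‖a‖ : ℂ)^2)) /
      ((1 : ℂ) - (‖a‖ : ℂ)^2 * (‖b‖ : ℂ)^2 +
        ((Real.sqrt ((1 - (‖a‖)^2) * (1 - (‖b‖)^2)) : ℝ) : ℂ) *
          ((‖1 - (starRingEnd ℂ a) * b‖ : ℝ) : ℂ))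
    hypDist cen m = hypDist m p := by
  intro cen p m
  have hza : (‖a‖)^2 = a.re^2 + a.im^2 := by
    rw [Complex.sq_norm, Complex.normSq_apply]; ring
  have hzb : (‖b‖)^2 = b.re^2 + b.im^2 := by
    rw [Complex.sq_norm, Complex.normSq_apply]; ring
  have hD1 : (2 : ℂ) - a * (starRingEnd ℂ) b - (starRingEnd ℂ) a * b
      = ((2 - 2*(a * (starRingEnd ℂ) b).re : ℝ) : ℂ) := by
    have hconj : (starRingEnd ℂ) a * b = (starRingEnd ℂ) (a * (starRingEnd ℂ) b) := by
      rw [map_mul]; simp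
    rw [hconj, show (2:ℂ) - a * (starRingEnd ℂ) b - (starRingEnd ℂ) (a * (starRingEnd ℂ) b)
      = 2 - (a * (starRingEnd ℂ) b + (starRingEnd ℂ) (a * (starRingEnd ℂ) b)) by ring,
      Complex.add_conj]
    push_cast; ring
  have hD2 : (2 : ℂ) - ((‖a‖ : ℝ) : ℂ)^2 - ((‖b‖ : ℝ) : ℂ)^2
      = ((2 - (‖a‖)^2 - (‖b‖)^2 : ℝ) : ℂ) := by push_cast; ring
  have hD3 : (1 : ℂ) - ((‖a‖ : ℝ) : ℂ)^2 * ((‖b‖ : ℝ) : ℂ)^2 +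
        ((Real.sqrt ((1 - (‖a‖)^2) * (1 - (‖b‖)^2)) : ℝ) : ℂ) *
          ((‖1 - (starRingEnd ℂ a) * b‖ : ℝ) : ℂ)
      = ((1 - (‖a‖)^2 * (‖b‖)^2 +
          Real.sqrt ((1 - (‖a‖)^2) * (1 - (‖b‖)^2)) *
          ‖1 - (starRingEnd ℂ a) * b‖ : ℝ) : ℂ) := by push_cast; ring
  show hypDist ((a * (1 - (‖b‖ : ℂ)^2) + b * (1 - (‖a‖ : ℂ)^2)) /
      (2 - a * (starRingEnd ℂ b) - (starRingEnd ℂ a) * b))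
      ((a * (1 - (‖b‖ : ℂ)^2) + b * (1 - (‖a‖ : ℂ)^2)) /
      ((1 : ℂ) - (‖a‖ : ℂ)^2 * (‖b‖ : ℂ)^2 +
        ((Real.sqrt ((1 - (‖a‖)^2) * (1 - (‖b‖)^2)) : ℝ) : ℂ) *
          ((‖1 - (starRingEnd ℂ a) * b‖ : ℝ) : ℂ)))
      = hypDist ((a * (1 - (‖b‖ : ℂ)^2) + b * (1 - (‖a‖ : ℂ)^2)) /
      ((1 : ℂ) - (‖a‖ : ℂ)^2 * (‖b‖ : ℂ)^2 +
        ((Real.sqrt ((1 - (‖a‖)^2) * (1 - (‖b‖)^2)) : ℝ) : ℂ) *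
          ((‖1 - (starRingEnd ℂ a) * b‖ : ℝ) : ℂ)))
      ((a * (1 - (‖b‖ : ℂ)^2) + b * (1 - (‖a‖ : ℂ)^2)) /
      (2 - (‖a‖ : ℂ)^2 - (‖b‖ : ℂ)^2))
  rw [hD1, hD2, hD3]
  have hu1 : (‖a‖)^2 < 1 := by nlinarith [norm_nonneg a]
  have hv1 : (‖b‖)^2 < 1 := by nlinarith [norm_nonneg b]
  have hSpos : 0 < Real.sqrt ((1 - (‖a‖)^2) * (1 - (‖b‖)^2)) :=
    Real.sqrt_pos.mpr (by nlinarith)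
  have hS2 : (Real.sqrt ((1 - (‖a‖)^2) * (1 - (‖b‖)^2)))^2
      = (1 - (‖a‖)^2) * (1 - (‖b‖)^2) := Real.sq_sqrt (by nlinarith)
  have hcpos : 0 < ‖1 - (starRingEnd ℂ) a * b‖ := by
    apply norm_pos_iff.mpr
    intro h
    have h1 : (starRingEnd ℂ) a * b = 1 := by linear_combination -h
    have h2 := congrArg (‖·‖) h1
    rw [norm_mul, Complex.norm_conj, norm_one] at h2
    nlinarith [norm_nonneg a, norm_nonneg b]
  have hc2 : (‖1 - (starRingEnd ℂ) a * b‖)^2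
      = 1 - 2*(a * (starRingEnd ℂ) b).re + (‖a‖)^2 * (‖b‖)^2 := by
    rw [Complex.sq_norm, hza, hzb]
    simp only [Complex.normSq_apply, Complex.sub_re, Complex.sub_im, Complex.one_re,
      Complex.one_im, Complex.mul_re, Complex.mul_im, Complex.conj_re, Complex.conj_im]
    ring
  have hL2 : (‖a * (1 - (‖b‖ : ℂ)^2) + b * (1 - (‖a‖ : ℂ)^2)‖)^2
      = (‖a‖)^2*(1-(‖b‖)^2)^2 + (‖b‖)^2*(1-(‖a‖)^2)^2
        + 2*(a * (starRingEnd ℂ) b).re*(1-(‖a‖)^2)*(1-(‖b‖)^2) := by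
    have hnum : a * (1 - (‖b‖ : ℂ)^2) + b * (1 - (‖a‖ : ℂ)^2)
        = a * ((1 - (‖b‖)^2 : ℝ) : ℂ) + b * ((1 - (‖a‖)^2 : ℝ) : ℂ) := by
      push_cast; ring
    rw [hnum, Complex.sq_norm, hza, hzb]
    simp only [Complex.normSq_apply, Complex.add_re, Complex.add_im, Complex.mul_re,
      Complex.mul_im, Complex.ofReal_re, Complex.ofReal_im, Complex.conj_re, Complex.conj_im,
      hza, hzb]
    ring
  exact core _ ((‖a‖)^2) ((‖b‖)^2) ((a * (starRingEnd ℂ) b).re)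
    _ _ (sq_nonneg _) hu1 (sq_nonneg _) hv1 hS2 hSpos hcpos hc2 hL2
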